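/- Characterization of adversarially achievable policies (Theorem: falsified cost conditions): Let Q̃* be the Bellman fixed point of cost c̃. Then Q̃* ∈ V_{w†} if and only if for all i ∈ S and all a ∈ A with a ≠ w†(i), c̃(i,a) > (e_i − β P_{ia})ᵀ (I − β P_{w†})^{-1} c̃_{w†}, where e_i ∈ ℝ^S is the i-th standard basis vector, P_{ia} = (p(i,1,a),…,p(i,S,a))ᵀ, (P_{w†})_{ij} = p(i,j,w†(i)), and (c̃_{w†})_i = c̃(i, w†(i)). -/

import Mathlib

open Finset Matrix

section Aux

variable {S A : Type*} [Fintype S] [DecidableEq S] [Fintype A] [Nonempty S] [Nonempty A]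

lemma ciInf_eq_of_min' {f : A → ℝ} {b0 : A} (h : ∀ b, f b0 ≤ f b) : (⨅ b, f b) = f b0 :=
  le_antisymm (ciInf_le (Finite.bddBelow_range f) b0) (le_ciInf h)

lemma mulVec_oneSub' (β : ℝ) (Pw : Matrix S S ℝ) (v : S → ℝ) (i : S) :
    (1 - β • Pw).mulVec v i = v i - β * ∑ j, Pw i j * v j := by
  simp [Matrix.mulVec, dotProduct, Matrix.sub_apply, Matrix.smul_apply, Matrix.one_apply,
    sub_mul, Finset.sum_sub_distrib, Finset.mul_sum, ite_mul, mul_assoc]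

lemma isUnit_oneSub' (p : S → S → A → ℝ) (hp0 : ∀ i j a, 0 ≤ p i j a)
    (hp1 : ∀ i a, ∑ j, p i j a = 1) (β : ℝ) (hβ0 : 0 < β) (hβ1 : β < 1)
    (wdag : S → A) (Pw : Matrix S S ℝ) (hPw : ∀ i j, Pw i j = p i j (wdag i)) :
    IsUnit (1 - β • Pw) := by
  rw [← Matrix.mulVec_injective_iff_isUnit]
  have key : ∀ u : S → ℝ, (1 - β • Pw).mulVec u = 0 → u = 0 := by
    intro u hu
    obtain ⟨i0, hi0⟩ := Finite.exists_max (fun i => |u i|)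
    have hrec : ∀ i, u i = β * ∑ j, Pw i j * u j := by
      intro i
      have h := congrFun hu i
      rw [mulVec_oneSub'] at h
      simp only [Pi.zero_apply] at h
      linarith
    have hsum : ∑ j, Pw i0 j = 1 := by
      rw [Finset.sum_congr rfl (fun j _ => hPw i0 j)]; exact hp1 i0 (wdag i0)
    have hb : |u i0| ≤ β * |u i0| := by
      calc |u i0| = β * |∑ j, Pw i0 j * u j| := by
              rw [hrec i0, abs_mul, abs_of_pos hβ0]
        _ ≤ β * ∑ j, |Pw i0 j * u j| :=
              mul_le_mul_of_nonneg_left (Finset.abs_sum_le_sum_abs _ _) hβ0.le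
        _ ≤ β * ∑ j, Pw i0 j * |u i0| := by
              apply mul_le_mul_of_nonneg_left _ hβ0.le
              apply Finset.sum_le_sum
              intro j _
              have hPnn : 0 ≤ Pw i0 j := by rw [hPw]; exact hp0 _ _ _
              rw [abs_mul, abs_of_nonneg hPnn]
              exact mul_le_mul_of_nonneg_left (hi0 j) hPnn
        _ = β * |u i0| := by rw [← Finset.sum_mul, hsum, one_mul]
    have h0 : |u i0| ≤ 0 := by nlinarith
    funext i
    have := (hi0 i).trans h0
    simpa [abs_nonpos_iff] using this
  intro v w hvw
  have h := key (v - w) (by rw [Matrix.mulVec_sub, hvw, sub_self])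
  funext i
  have := congrFun h i
  simpa [sub_eq_zero] using this

lemma bellman_unique' (p : S → S → A → ℝ) (hp0 : ∀ i j a, 0 ≤ p i j a)
    (hp1 : ∀ i a, ∑ j, p i j a = 1) (β : ℝ) (hβ0 : 0 < β) (hβ1 : β < 1)
    (ctil : S × A → ℝ) (Q Q' : S × A → ℝ)
    (hQ : ∀ i a, Q (i, a) = ctil (i, a) + β * ∑ j, p i j a * (⨅ b, Q (j, b)))
    (hQ' : ∀ i a, Q' (i, a) = ctil (i, a) + β * ∑ j, p i j a * (⨅ b, Q' (j, b))) :
    Q = Q' := by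
  obtain ⟨x0, hx0⟩ := Finite.exists_max (fun x : S × A => |Q x - Q' x|)
  set M0 := |Q x0 - Q' x0| with hM0def
  have hM0 : 0 ≤ M0 := abs_nonneg _
  have hd : ∀ j, |(⨅ b, Q (j, b)) - (⨅ b, Q' (j, b))| ≤ M0 := by
    intro j
    obtain ⟨b1, hb1⟩ := Finite.exists_min (fun b => Q (j, b))
    obtain ⟨b2, hb2⟩ := Finite.exists_min (fun b => Q' (j, b))
    rw [ciInf_eq_of_min' hb1, ciInf_eq_of_min' hb2, abs_le]
    have h1 : Q (j, b1) ≤ Q (j, b2) := hb1 b2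
    have h2 : Q' (j, b2) ≤ Q' (j, b1) := hb2 b1
    have h3 := abs_le.mp (hx0 (j, b2))
    have h4 := abs_le.mp (hx0 (j, b1))
    constructor <;> linarith [h3.1, h3.2, h4.1, h4.2]
  have hcontract : ∀ x : S × A, |Q x - Q' x| ≤ β * M0 := by
    rintro ⟨i, a⟩
    rw [hQ i a, hQ' i a]
    have heq : ctil (i, a) + β * ∑ j, p i j a * (⨅ b, Q (j, b)) -
        (ctil (i, a) + β * ∑ j, p i j a * (⨅ b, Q' (j, b))) =
        β * ∑ j, p i j a * ((⨅ b, Q (j, b)) - (⨅ b, Q' (j, b))) := by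
      simp only [mul_sub, Finset.sum_sub_distrib]
      ring
    rw [heq, abs_mul, abs_of_pos hβ0]
    apply mul_le_mul_of_nonneg_left _ hβ0.le
    calc |∑ j, p i j a * ((⨅ b, Q (j, b)) - (⨅ b, Q' (j, b)))|
        ≤ ∑ j, |p i j a * ((⨅ b, Q (j, b)) - (⨅ b, Q' (j, b)))| :=
          Finset.abs_sum_le_sum_abs _ _
      _ ≤ ∑ j, p i j a * M0 := by
          apply Finset.sum_le_sum
          intro j _
          rw [abs_mul, abs_of_nonneg (hp0 i j a)]
          exact mul_le_mul_of_nonneg_left (hd j) (hp0 i j a)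
      _ = M0 := by rw [← Finset.sum_mul, hp1 i a, one_mul]
  have hle : M0 ≤ β * M0 := hcontract x0
  have hM00 : M0 ≤ 0 := by nlinarith
  funext x
  have := (hx0 x).trans hM00
  have := abs_nonpos_iff.mp this
  linarith [sub_eq_zero.mp this]

end Aux

theorem achievable_policy_iff {S A : Type*} [Fintype S] [DecidableEq S] [Fintype A]
    [Nonempty S] [Nonempty A]
    (p : S → S → A → ℝ) (hp0 : ∀ i j a, 0 ≤ p i j a) (hp1 : ∀ i a, ∑ j, p i j a = 1)
    (β : ℝ) (hβ0 : 0 < β) (hβ1 : β < 1) (wdag : S → A) (ctil : S × A → ℝ)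
    (Qtil : S × A → ℝ)
    (hQt : ∀ i a, Qtil (i, a) = ctil (i, a) + β * ∑ j, p i j a * (⨅ b, Qtil (j, b)))
    (Pw : Matrix S S ℝ) (hPw : ∀ i j, Pw i j = p i j (wdag i)) :
    (∀ i : S, ∀ a : A, a ≠ wdag i → Qtil (i, wdag i) < Qtil (i, a)) ↔
      (∀ i : S, ∀ a : A, a ≠ wdag i →
        ctil (i, a) >
          ((1 - β • Pw)⁻¹.mulVec (fun k => ctil (k, wdag k))) i -
            β * ∑ j, p i j a * ((1 - β • Pw)⁻¹.mulVec (fun k => ctil (k, wdag k))) j) := by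
  have hU : IsUnit (1 - β • Pw) := isUnit_oneSub' p hp0 hp1 β hβ0 hβ1 wdag Pw hPw
  have hUdet := (Matrix.isUnit_iff_isUnit_det _).mp hU
  have hinv : ∀ v : S → ℝ, (1 - β • Pw)⁻¹.mulVec ((1 - β • Pw).mulVec v) = v := by
    intro v
    rw [Matrix.mulVec_mulVec, Matrix.nonsing_inv_mul _ hUdet, Matrix.one_mulVec]
  have hinv' : ∀ v : S → ℝ, (1 - β • Pw).mulVec ((1 - β • Pw)⁻¹.mulVec v) = v := by
    intro v
    rw [Matrix.mulVec_mulVec, Matrix.mul_nonsing_inv _ hUdet, Matrix.one_mulVec]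
  set cw : S → ℝ := fun k => ctil (k, wdag k) with hcw
  constructor
  · intro hV i a ha
    have hmin : ∀ j, (⨅ b, Qtil (j, b)) = Qtil (j, wdag j) := by
      intro j
      apply ciInf_eq_of_min'
      intro b
      rcases eq_or_ne b (wdag j) with rfl | hb
      · exact le_refl _
      · exact (hV j b hb).le
    have hQw : (1 - β • Pw).mulVec (fun k => Qtil (k, wdag k)) = cw := by
      funext i'
      rw [mulVec_oneSub']
      have h := hQt i' (wdag i')
      simp only [hmin] at h
      have hsum : ∑ j, Pw i' j * Qtil (j, wdag j) = ∑ j, p i' j (wdag i') * Qtil (j, wdag j) :=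
        Finset.sum_congr rfl (fun j _ => by rw [hPw])
      rw [hsum]
      simp only [hcw]
      linarith
    have hEq : (1 - β • Pw)⁻¹.mulVec cw = fun k => Qtil (k, wdag k) := by
      rw [← hQw, hinv]
    rw [hEq]
    have hlt := hV i a ha
    have hQa := hQt i a
    simp only [hmin] at hQa
    linarith
  · intro hC
    set Qw : S → ℝ := (1 - β • Pw)⁻¹.mulVec cw with hQwdef
    have hfix : (1 - β • Pw).mulVec Qw = cw := hinv' cw
    have hQwEq : ∀ i, Qw i = ctil (i, wdag i) + β * ∑ j, p i j (wdag i) * Qw j := by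
      intro i
      have h := congrFun hfix i
      rw [mulVec_oneSub'] at h
      have hsum : ∑ j, Pw i j * Qw j = ∑ j, p i j (wdag i) * Qw j :=
        Finset.sum_congr rfl (fun j _ => by rw [hPw])
      rw [hsum] at h
      simp only [hcw] at h
      linarith
    set Q : S × A → ℝ := fun x => ctil x + β * ∑ j, p x.1 j x.2 * Qw j with hQdef
    have hQw' : ∀ i, Q (i, wdag i) = Qw i := fun i => (hQwEq i).symm
    have hQlt : ∀ i a, a ≠ wdag i → Q (i, wdag i) < Q (i, a) := by
      intro i a ha
      have := hC i a ha
      rw [hQw' i]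
      simp only [hQdef]
      linarith
    have hminQ : ∀ j, (⨅ b, Q (j, b)) = Qw j := by
      intro j
      rw [← hQw' j]
      apply ciInf_eq_of_min'
      intro b
      rcases eq_or_ne b (wdag j) with rfl | hb
      · exact le_refl _
      · exact (hQlt j b hb).le
    have hQfix : ∀ i a, Q (i, a) = ctil (i, a) + β * ∑ j, p i j a * (⨅ b, Q (j, b)) := by
      intro i a
      simp only [hminQ]
      rfl
    have huniq : Qtil = Q := bellman_unique' p hp0 hp1 β hβ0 hβ1 ctil Qtil Q hQt hQfix
    intro i a ha
    rw [huniq]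
    exact hQlt i a ha
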